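/- arXiv:2410.14688 — 5 statements merged into one kernel-verified Lean document; each statement's English description precedes it below -/
import Mathlib

section
/- Let f : (ℕ → ℕ) → (ℕ → ℤ) be defined by f(c)(i) = (c(i+1) : ℤ) - (c(i) : ℤ). Then f⁻¹(SumToInfinity) = FinOcc; that is, for every c : ℕ → ℕ, the partial sums k ↦ ∑_{i<k} (c(i+1) - c(i)) tend to +∞ if and only if every natural number occurs only finitely often in the sequence c. -/
/-- `SumToInfinity` is the set of integer sequences whose partial sums tend to `+∞`. -/
def SumToInfinity : Set (ℕ → ℤ) :=
  {w | Filter.Tendsto (fun k => ∑ i ∈ Finset.range k, w i) Filter.atTop Filter.atTop}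

/-- `FinOcc` is the set of sequences of naturals in which every value occurs finitely often. -/
def FinOcc : Set (ℕ → ℕ) :=
  {c | ∀ m : ℕ, {k : ℕ | c k = m}.Finite}

theorem preimage_sumToInfinity_eq_finOcc :
    (fun c : ℕ → ℕ => fun i : ℕ => ((c (i + 1) : ℤ) - (c i : ℤ))) ⁻¹' SumToInfinity
      = FinOcc := by
  ext c
  have htel : (fun k => ∑ i ∈ Finset.range k, ((c (i + 1) : ℤ) - (c i : ℤ)))
      = fun k => (c k : ℤ) - (c 0 : ℤ) := by
    funext k
    exact Finset.sum_range_sub (fun i => (c i : ℤ)) k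
  have key : Filter.Tendsto (fun k => ∑ i ∈ Finset.range k, ((c (i + 1) : ℤ) - (c i : ℤ)))
      Filter.atTop Filter.atTop ↔ Filter.Tendsto c Filter.atTop Filter.atTop := by
    rw [htel]
    constructor
    · intro h
      have h2 := Filter.tendsto_atTop_add_const_right Filter.atTop ((c 0 : ℤ)) h
      simp only [sub_add_cancel] at h2
      exact tendsto_natCast_atTop_iff.mp h2
    · intro h
      have h' : Filter.Tendsto (fun k => (c k : ℤ)) Filter.atTop Filter.atTop :=
        tendsto_natCast_atTop_iff.mpr h
      exact Filter.tendsto_atTop_add_const_right Filter.atTop (-(c 0 : ℤ)) h' |>.congr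
        (fun k => by ring)
  simp only [Set.mem_preimage, SumToInfinity, FinOcc, Set.mem_setOf_eq, key]
  constructor
  · intro h m
    have := h.eventually_gt_atTop m
    rw [← Nat.cofinite_eq_atTop, Filter.eventually_cofinite] at this
    exact this.subset (fun k hk => by simp_all)
  · intro h
    rw [Filter.tendsto_atTop]
    intro m
    rw [← Nat.cofinite_eq_atTop, Filter.eventually_cofinite]
    have : {k | ¬ m ≤ c k} ⊆ ⋃ j ∈ Finset.range m, {k | c k = j} := by
      intro k hk
      simp only [Set.mem_setOf_eq, not_le] at hk
      exact Set.mem_biUnion (Finset.mem_range.mpr hk) rfl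
    exact ((Set.Finite.biUnion (Finset.range m).finite_toSet (fun j _ => h j))).subset this
end

section
/- The graph U satisfies SumToInfinity: for every infinite path in U, i.e., for all u : ℕ → List Ordinal and w : ℕ → ℤ such that for every i there is an edge u(i) →w(i) u(i+1) in U, the partial sums k ↦ ∑_{i<k} w i tend to +∞. -/
/-- The edge relation of the graph `U`. -/
def UEdge (u : List Ordinal) (w : ℤ) (u' : List Ordinal) : Prop :=
  (u'.length : ℤ) ≤ (u.length : ℤ) + w ∧
    ((u.length : ℤ) + w = (u'.length : ℤ) → List.Lex (· < ·) u' u)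

private lemma antitone_eventually_const {α : Type*} [PartialOrder α] [WellFoundedLT α]
    (f : ℕ → α) (hf : ∀ i, f (i + 1) ≤ f i) : ∃ N, ∀ k, N ≤ k → f k = f N := by
  obtain ⟨a, ⟨N, rfl⟩, hmin⟩ :=
    (wellFounded_lt (α := α)).has_min (Set.range f) ⟨f 0, 0, rfl⟩
  refine ⟨N, fun k hk => ?_⟩
  have hle : f k ≤ f N := by
    clear hmin
    induction hk with
    | refl => exact le_rfl
    | step _ ih => exact le_trans (hf _) ih
  rcases lt_or_eq_of_le hle with hlt | heq
  · exact absurd hlt (hmin _ ⟨k, rfl⟩)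
  · exact heq

private lemma no_lex_descent : ∀ (L : ℕ) (v : ℕ → List Ordinal),
    (∀ i, (v i).length ≤ L) → (∀ i, List.Lex (· < ·) (v (i + 1)) (v i)) → False := by
  intro L
  induction L with
  | zero =>
    intro v hlen hd
    have h0 : v 0 = [] := List.length_eq_zero_iff.mp (Nat.le_zero.mp (hlen 0))
    have := hd 0
    rw [h0] at this
    exact List.not_lex_nil this
  | succ L ih =>
    intro v hlen hd
    have hne : ∀ i, v i ≠ [] := by
      intro i hi
      have := hd i
      rw [hi] at this
      exact List.not_lex_nil this
    have hante : ∀ i, (v (i + 1)).headI ≤ (v i).headI := by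
      intro i
      obtain ⟨a, t, h1⟩ := List.exists_cons_of_ne_nil (hne i)
      obtain ⟨a', t', h2⟩ := List.exists_cons_of_ne_nil (hne (i + 1))
      have hdd := hd i
      rw [h1, h2] at hdd ⊢
      cases hdd with
      | cons h => simp
      | rel h => simpa using le_of_lt h
    obtain ⟨N, hN⟩ := antitone_eventually_const (fun i => (v i).headI) hante
    refine ih (fun i => (v (N + i)).tail) (fun i => ?_) (fun i => ?_)
    · show (v (N + i)).tail.length ≤ L
      have := hlen (N + i)
      have ht : (v (N + i)).tail.length = (v (N + i)).length - 1 := List.length_tail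
      omega
    · obtain ⟨a, t, h1⟩ := List.exists_cons_of_ne_nil (hne (N + i))
      obtain ⟨a', t', h2⟩ := List.exists_cons_of_ne_nil (hne (N + i + 1))
      have hdd := hd (N + i)
      have heq : a' = a := by
        have e1 := hN (N + i) (Nat.le_add_right _ _)
        have e2 := hN (N + i + 1) (by omega)
        simp only [h1, h2, List.headI] at e1 e2
        exact e2.trans e1.symm
      rw [h1, h2] at hdd
      subst heq
      show List.Lex (· < ·) (v (N + i + 1)).tail (v (N + i)).tail
      rw [h1, h2]
      cases hdd with
      | cons h => simpa using h
      | rel h => exact absurd h (lt_irrefl _)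

theorem U_satisfies_sumToInfinity (u : ℕ → List Ordinal) (w : ℕ → ℤ)
    (h : ∀ i, UEdge (u i) (w i) (u (i + 1))) :
    Filter.Tendsto (fun k => ∑ i ∈ Finset.range k, w i) Filter.atTop Filter.atTop := by
  by_contra hcon
  rw [Filter.tendsto_atTop_atTop] at hcon
  push_neg at hcon
  obtain ⟨b, hb⟩ := hcon
  set S : ℕ → ℤ := fun k => ∑ i ∈ Finset.range k, w i with hSdef
  set s : ℕ → ℤ := fun k => ((u 0).length : ℤ) + S k - ((u k).length : ℤ) with hsdef
  have hstep : ∀ k, s k ≤ s (k + 1) := by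
    intro k
    have h1 := (h k).1
    simp only [hsdef, hSdef, Finset.sum_range_succ]
    linarith
  have hmono : Monotone s := monotone_nat_of_le_succ hstep
  have hs0 : s 0 = 0 := by simp [hsdef, hSdef]
  have hsnn : ∀ k, 0 ≤ s k := fun k => hs0 ▸ hmono (Nat.zero_le k)
  set B : ℤ := ((u 0).length : ℤ) + b with hBdef
  have hBs : ∀ k, s k ≤ B := by
    intro k
    obtain ⟨k', hk', hSk'⟩ := hb k
    have h1 := hmono hk'
    have h2 : (0 : ℤ) ≤ ((u k').length : ℤ) := Int.natCast_nonneg _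
    have : s k' = ((u 0).length : ℤ) + S k' - ((u k').length : ℤ) := rfl
    have hSk'b : S k' < b := hSk'
    linarith
  have hg : ∀ i, (B - s (i + 1)).toNat ≤ (B - s i).toNat := by
    intro i
    have := hstep i
    omega
  obtain ⟨N, hN⟩ := antitone_eventually_const (fun i => (B - s i).toNat) hg
  have hsc : ∀ k, N ≤ k → s k = s N := by
    intro k hk
    have := hN k hk
    have h1 := hBs k
    have h2 := hBs N
    omega
  have hlex : ∀ k, N ≤ k → List.Lex (· < ·) (u (k + 1)) (u k) := by
    intro k hk
    apply (h k).2
    have e1 := hsc k hk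
    have e2 := hsc (k + 1) (le_trans hk (Nat.le_succ k))
    simp only [hsdef, hSdef, Finset.sum_range_succ] at e1 e2
    linarith
  have htrans : ∀ m k, N ≤ m → m < k → List.Lex (· < ·) (u k) (u m) := by
    intro m k hm hmk
    induction k with
    | zero => omega
    | succ k ihk =>
      rcases Nat.lt_succ_iff_lt_or_eq.mp hmk with h' | h'
      · exact List.lex_trans (fun h1 h2 => lt_trans h1 h2) (hlex k (le_trans hm (le_of_lt h'))) (ihk h')
      · subst h'; exact hlex m hm
  -- extract a subsequence with small partial sums
  have hb' : ∀ n, ∃ k, n ≤ k ∧ S k < b := by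
    intro n
    obtain ⟨k, hk1, hk2⟩ := hb n
    exact ⟨k, hk1, hk2⟩
  choose c hc1 hc2 using hb'
  set kseq : ℕ → ℕ := fun i => Nat.rec (c N) (fun _ prev => c (prev + 1)) i with hkdef
  have hk0 : kseq 0 = c N := rfl
  have hksucc : ∀ i, kseq (i + 1) = c (kseq i + 1) := fun i => rfl
  have hkN : ∀ i, N ≤ kseq i := by
    intro i
    induction i with
    | zero => exact le_trans (hc1 N) (by rw [hk0])
    | succ i ih =>
      rw [hksucc]
      exact le_trans ih (le_trans (Nat.le_succ _) (hc1 _))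
  have hklt : ∀ i, kseq i < kseq (i + 1) := by
    intro i
    rw [hksucc]
    exact lt_of_lt_of_le (Nat.lt_succ_self _) (hc1 _)
  have hkS : ∀ i, S (kseq i) < b := by
    intro i
    cases i with
    | zero => rw [hk0]; exact hc2 N
    | succ i => rw [hksucc]; exact hc2 _
  -- the subsequence has bounded length and is lex-descending
  refine no_lex_descent B.toNat (fun i => u (kseq i)) (fun i => ?_) (fun i => ?_)
  · show (u (kseq i)).length ≤ B.toNat
    have h1 : s (kseq i) = s N := hsc _ (hkN i)
    have h2 : s (kseq i) = ((u 0).length : ℤ) + S (kseq i) - ((u (kseq i)).length : ℤ) := rfl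
    have h3 := hkS i
    have h4 := hsnn N
    have h5 : ((u (kseq i)).length : ℤ) < B := by rw [hBdef]; linarith
    omega
  · exact htrans _ _ (hkN i) (hklt i)
end

section
/- Every cycle in the graph U has strictly positive total weight: for every k ≥ 1, every u : ℕ → List Ordinal and w : ℕ → ℤ such that u(0) = u(k) and for every i < k there is an edge u(i) →w(i) u(i+1) in U, one has ∑_{i<k} w i ≥ 1. -/
theorem U_cycles_positive (k : ℕ) (hk : 1 ≤ k) (u : ℕ → List Ordinal) (w : ℕ → ℤ)
    (hcycle : u 0 = u k) (h : ∀ i < k, UEdge (u i) (w i) (u (i + 1))) :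
    1 ≤ ∑ i ∈ Finset.range k, w i := by
  by_contra hlt
  push_neg at hlt
  have hle : ∑ i ∈ Finset.range k, w i ≤ 0 := by omega
  set f : ℕ → ℤ := fun i => ((u i).length : ℤ) with hf
  have htel : ∑ i ∈ Finset.range k, (f (i + 1) - f i) = f k - f 0 :=
    Finset.sum_range_sub f k
  have hf0k : f 0 = f k := by simp only [hf, hcycle]
  have hnonneg : ∀ i ∈ Finset.range k, 0 ≤ w i - (f (i + 1) - f i) := by
    intro i hi
    have := (h i (Finset.mem_range.mp hi)).1
    simp only [hf]
    omega
  have hsum0 : ∑ i ∈ Finset.range k, (w i - (f (i + 1) - f i)) = ∑ i ∈ Finset.range k, w i := by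
    rw [Finset.sum_sub_distrib, htel, hf0k]
    ring
  have hzero : ∀ i ∈ Finset.range k, w i - (f (i + 1) - f i) = 0 := by
    have : ∑ i ∈ Finset.range k, (w i - (f (i + 1) - f i)) ≤ 0 := by rw [hsum0]; exact hle
    intro i hi
    have hge : 0 ≤ ∑ i ∈ Finset.range k, (w i - (f (i + 1) - f i)) :=
      Finset.sum_nonneg hnonneg
    have hsz : ∑ i ∈ Finset.range k, (w i - (f (i + 1) - f i)) = 0 := le_antisymm this hge
    exact (Finset.sum_eq_zero_iff_of_nonneg hnonneg).mp hsz i hi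
  have hlex : ∀ i < k, List.Lex (· < ·) (u (i + 1)) (u i) := by
    intro i hi
    have heq := hzero i (Finset.mem_range.mpr hi)
    exact (h i hi).2 (by simp only [hf] at heq ⊢; omega)
  have hchain : ∀ j, 1 ≤ j → j ≤ k → List.Lex (· < ·) (u j) (u 0) := by
    intro j hj1 hjk
    induction j with
    | zero => omega
    | succ n ih =>
      rcases Nat.eq_or_lt_of_le hj1 with h1 | h1
      · simpa [← h1] using hlex 0 (by omega)
      · exact List.lex_trans (fun h₁ h₂ => lt_trans h₁ h₂) (hlex n (by omega)) (ih (by omega) (by omega))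
  have : List.Lex (· < ·) (u 0) (u 0) := by
    have := hchain k hk le_rfl
    rwa [← hcycle] at this
  exact irrefl_of _ _ this
end

section
/- Let V be a nonempty type and E : V → ℤ → V → Prop a ℤ-labelled edge relation such that every infinite path satisfies SumToInfinity (i.e., for all v : ℕ → V and w : ℕ → ℤ with E (v i) (w i) (v (i+1)) for all i, the partial sums of w tend to +∞). Then there exists a vertex v₀ such that every nonempty finite path starting at v₀ has total weight ≥ 1. -/
theorem exists_vertex_all_paths_positive (V : Type*) [Nonempty V] (E : V → ℤ → V → Prop)
    (hsat : ∀ (v : ℕ → V) (w : ℕ → ℤ), (∀ i, E (v i) (w i) (v (i + 1))) →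
      Filter.Tendsto (fun k => ∑ i ∈ Finset.range k, w i) Filter.atTop Filter.atTop) :
    ∃ v₀ : V, ∀ (k : ℕ) (x : ℕ → V) (w : ℕ → ℤ), 1 ≤ k → x 0 = v₀ →
      (∀ i < k, E (x i) (w i) (x (i + 1))) → 1 ≤ ∑ i ∈ Finset.range k, w i := by
  by_contra h
  push_neg at h
  choose K X W hK hX0 hXE hXsum using h
  obtain ⟨v₀⟩ := ‹Nonempty V›
  -- checkpoint vertices
  let c : ℕ → V := fun n => Nat.rec v₀ (fun _ cn => X cn (K cn)) n
  have hcsucc : ∀ n, c (n + 1) = X (c n) (K (c n)) := fun n => rfl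
  -- cumulative lengths
  let L : ℕ → ℕ := fun n => ∑ m ∈ Finset.range n, K (c m)
  have hLsucc : ∀ n, L (n + 1) = L n + K (c n) := fun n => Finset.sum_range_succ _ n
  have hL0 : L 0 = 0 := rfl
  have hLmono : StrictMono L := by
    apply strictMono_nat_of_lt_succ
    intro n
    have := hK (c n)
    rw [hLsucc]; omega
  have hLle : ∀ n, n ≤ L n := fun n => hLmono.le_apply
  -- segment index
  let seg : ℕ → ℕ := fun i => Nat.findGreatest (fun n => L n ≤ i) i
  have hseg1 : ∀ i, L (seg i) ≤ i := by
    intro i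
    have h0 : L 0 ≤ i := by rw [hL0]; exact Nat.zero_le i
    exact Nat.findGreatest_spec (P := fun n => L n ≤ i) (Nat.zero_le i) h0
  have hseg2 : ∀ i, i < L (seg i + 1) := by
    intro i
    by_contra hcon
    push_neg at hcon
    have h1 : seg i + 1 ≤ i := le_trans (hLle _) hcon
    have h2 : seg i + 1 ≤ seg i := Nat.le_findGreatest h1 hcon
    omega
  have hseg_eq : ∀ n i, L n ≤ i → i < L (n + 1) → seg i = n := by
    intro n i h1 h2
    have a1 := hseg1 i
    have a2 := hseg2 i
    have b1 : seg i < n + 1 := hLmono.lt_iff_lt.mp (lt_of_le_of_lt a1 h2)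
    have b2 : n < seg i + 1 := hLmono.lt_iff_lt.mp (lt_of_le_of_lt h1 a2)
    omega
  -- the infinite path
  let v : ℕ → V := fun i => X (c (seg i)) (i - L (seg i))
  let w : ℕ → ℤ := fun i => W (c (seg i)) (i - L (seg i))
  have hvL : ∀ n, v (L n) = c n := by
    intro n
    have hs : seg (L n) = n := hseg_eq n (L n) le_rfl (hLmono (Nat.lt_succ_self n))
    simp only [v, hs, Nat.sub_self]
    exact hX0 (c n)
  have hedge : ∀ i, E (v i) (w i) (v (i + 1)) := by
    intro i
    have h1 := hseg1 i
    have h2 := hseg2 i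
    have hlt : i - L (seg i) < K (c (seg i)) := by
      have := hLsucc (seg i); omega
    have hE := hXE (c (seg i)) _ hlt
    have hnext : v (i + 1) = X (c (seg i)) (i - L (seg i) + 1) := by
      rcases lt_or_eq_of_le (Nat.succ_le_of_lt h2) with hl | he
      · have hs : seg (i + 1) = seg i := hseg_eq (seg i) (i + 1) (by omega) hl
        simp only [v, hs]
        congr 1
        omega
      · have hs : seg (i + 1) = seg i + 1 :=
          hseg_eq (seg i + 1) (i + 1) (le_of_eq he.symm)
            (by have h3 := hLmono (show seg i + 1 < seg i + 1 + 1 by omega); omega)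
        simp only [v, hs]
        rw [← he, Nat.sub_self, hX0, hcsucc]
        congr 1
        have := hLsucc (seg i); omega
    rw [hnext]
    have hveq : v i = X (c (seg i)) (i - L (seg i)) := rfl
    rw [hveq]
    exact hE
  -- partial sums at checkpoints are ≤ 0
  have hsum : ∀ m, ∑ i ∈ Finset.range (L m), w i ≤ 0 := by
    intro m
    induction m with
    | zero => simp [hL0]
    | succ m ih =>
      rw [hLsucc, Finset.sum_range_add]
      have hseg' : ∑ i ∈ Finset.range (K (c m)), w (L m + i)
          = ∑ i ∈ Finset.range (K (c m)), W (c m) i := by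
        apply Finset.sum_congr rfl
        intro i hi
        rw [Finset.mem_range] at hi
        have hs : seg (L m + i) = m :=
          hseg_eq m (L m + i) (by omega) (by rw [hLsucc]; omega)
        simp only [w, hs]
        congr 1
        omega
      have := hXsum (c m)
      rw [hseg']
      omega
  -- contradiction with tendsto atTop
  have htend := hsat v w hedge
  obtain ⟨N, hN⟩ := Filter.eventually_atTop.mp (htend.eventually_ge_atTop 1)
  have := hN (L N) (hLle N)
  have := hsum N
  omega
end

section
/- Let u : ℕ → List Ordinal and w : ℕ → ℤ be an infinite path in the graph U (so that for every i, u(i) →w(i) u(i+1) is an edge of U), and for each i define b i : ℤ to be 0 if (u(i).length : ℤ) + w(i) = u(i+1).length and 1 otherwise. Then for every k, ∑_{i<k} w i ≥ (u(k).length : ℤ) - u(0).length + ∑_{i<k} b i. -/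
theorem partial_sums_ge_length_plus_b (u : ℕ → List Ordinal) (w : ℕ → ℤ)
    (h : ∀ i, UEdge (u i) (w i) (u (i + 1)))
    (b : ℕ → ℤ)
    (hb : ∀ i, b i = if ((u i).length : ℤ) + w i = ((u (i + 1)).length : ℤ) then 0 else 1)
    (k : ℕ) :
    ((u k).length : ℤ) - ((u 0).length : ℤ) + ∑ i ∈ Finset.range k, b i
      ≤ ∑ i ∈ Finset.range k, w i := by
  induction k with
  | zero => simp
  | succ k ih =>
    have hk : ((u (k + 1)).length : ℤ) + b k ≤ ((u k).length : ℤ) + w k := by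
      rw [hb k]
      by_cases he : ((u k).length : ℤ) + w k = ((u (k + 1)).length : ℤ)
      · simp [he]
      · simp only [he, if_false]
        have := (h k).1
        omega
    rw [Finset.sum_range_succ, Finset.sum_range_succ]
    omega
end
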